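/- (Lemma 1, reward mismatch due to diversity.) Let d ≥ 1, D > 0, and let ψ assign to each response–prompt pair a feature vector in ℝ^d of norm at most D, with Bradley–Terry preference probabilities p_φ(z) = σ(⟨φ, ψ(y₁, x) − ψ(y₂, x)⟩) over a fixed set Z of comparisons, where σ(t) = 1/(1 + e^{−t}). Let U be a finite set of sub-population groups with |U| ≥ 2, let φ_k ∈ ℝ^d be the reward parameter of group k, let η : U → [0,1] be weights summing to 1, and suppose φ* ∈ ℝ^d satisfies p_{φ*}(z) = Σ_{k∈U} η(k) p_{φ_k}(z) for all z ∈ Z. Fix u, j ∈ U and suppose the diversity margin ε := d(p_{φ_u}, p_{φ_j}) − max_{k∈U, k≠u} d(p_{φ_k}, p_{φ_j}) is strictly positive, where d(p, q) = sup_{z∈Z} |p(z) − q(z)|. Then ‖φ* − φ_u‖ ≥ ε (1 − η(u)) / (4D). -/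

import Mathlib

open scoped BigOperators

/-- **Lemma 1 (Reward mismatch due to diversity).**
For Bradley–Terry preference probabilities with features bounded by `D`, group reward
parameters `φ k`, weights `η` summing to 1, and aggregate parameter `φ*` matching the
η-mixture of the group preference probabilities, if the diversity margin
`ε = d(p_{φ_u}, p_{φ_j}) - max_{k ≠ u} d(p_{φ_k}, p_{φ_j})` is positive, then
`‖φ* - φ_u‖ ≥ ε (1 - η u) / (4 D)`. -/
theorem stmt_7 {d : ℕ} (hd : 1 ≤ d) {Y X Z U : Type*} [Nonempty Z]
    [Fintype U] [DecidableEq U] (hU : 1 < Fintype.card U)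
    (D : ℝ) (hD : 0 < D)
    (ψ : Y → X → EuclideanSpace ℝ (Fin d)) (hψ : ∀ y x, ‖ψ y x‖ ≤ D)
    (y₁ y₂ : Z → Y) (x : Z → X)
    (σ : ℝ → ℝ) (hσ : ∀ t, σ t = 1 / (1 + Real.exp (-t)))
    (p : EuclideanSpace ℝ (Fin d) → Z → ℝ)
    (hp : ∀ φ z, p φ z = σ ((inner ℝ φ (ψ (y₁ z) (x z) - ψ (y₂ z) (x z)) : ℝ)))
    (φs : U → EuclideanSpace ℝ (Fin d))
    (η : U → ℝ) (hη0 : ∀ k, 0 ≤ η k) (hη1 : ∀ k, η k ≤ 1) (hηsum : ∑ k, η k = 1)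
    (φstar : EuclideanSpace ℝ (Fin d))
    (hmix : ∀ z, p φstar z = ∑ k, η k * p (φs k) z)
    (dist : (Z → ℝ) → (Z → ℝ) → ℝ)
    (hdist : ∀ a b, dist a b = ⨆ z, |a z - b z|)
    (u j : U) (hne : (Finset.univ.erase u).Nonempty)
    (ε : ℝ)
    (hε : ε = dist (p (φs u)) (p (φs j)) -
      (Finset.univ.erase u).sup' hne fun k => dist (p (φs k)) (p (φs j)))
    (hεpos : 0 < ε) :
    ε * (1 - η u) / (4 * D) ≤ ‖φstar - φs u‖ := by

  classical
  -- σ is between 0 and 1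
  have hσ01 : ∀ t, 0 ≤ σ t ∧ σ t ≤ 1 := by
    intro t; rw [hσ]
    have h1 : 0 < 1 + Real.exp (-t) := by positivity
    constructor
    · positivity
    · rw [div_le_one h1]; linarith [Real.exp_pos (-t)]
  -- σ is 1-Lipschitz
  have hlip : ∀ a b : ℝ, |σ a - σ b| ≤ |a - b| := by
    have key : ∀ a b : ℝ, a ≤ b → σ b - σ a ≤ b - a ∧ 0 ≤ σ b - σ a := by
      intro a b hab
      rw [hσ, hσ]
      set x := Real.exp (-a) with hx
      set y := Real.exp (-b) with hy
      have hx0 : 0 < x := Real.exp_pos _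
      have hy0 : 0 < y := Real.exp_pos _
      have h2 : y = x * Real.exp (a - b) := by
        rw [hx, hy, ← Real.exp_add]; ring_nf
      have hxy : x - y ≤ x * (b - a) := by
        have h1 : (a - b) + 1 ≤ Real.exp (a - b) := Real.add_one_le_exp _
        nlinarith
      have hyx : y ≤ x := by
        have h1 : Real.exp (a - b) ≤ 1 := Real.exp_le_one_iff.mpr (by linarith)
        nlinarith
      constructor
      · rw [div_sub_div _ _ (by positivity) (by positivity), div_le_iff₀ (by positivity)]
        nlinarith
      · rw [div_sub_div _ _ (by positivity) (by positivity)]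
        apply div_nonneg
        · nlinarith
        · positivity
    intro a b
    rcases le_total a b with h | h
    · obtain ⟨h1, h2⟩ := key a b h
      rw [abs_of_nonpos (by linarith), abs_of_nonpos (by linarith)]
      linarith
    · obtain ⟨h1, h2⟩ := key b a h
      rw [abs_of_nonneg (by linarith), abs_of_nonneg (by linarith)]
      linarith
  -- pointwise bounds on preference differences
  have hpbd : ∀ (φ φ' : EuclideanSpace ℝ (Fin d)) z, |p φ z - p φ' z| ≤ 1 := by
    intro φ φ' z
    rw [hp, hp]
    obtain ⟨h1, h2⟩ := hσ01 ((inner ℝ φ (ψ (y₁ z) (x z) - ψ (y₂ z) (x z)) : ℝ))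
    obtain ⟨h3, h4⟩ := hσ01 ((inner ℝ φ' (ψ (y₁ z) (x z) - ψ (y₂ z) (x z)) : ℝ))
    rw [abs_le]; constructor <;> linarith
  have hplip : ∀ (φ φ' : EuclideanSpace ℝ (Fin d)) z,
      |p φ z - p φ' z| ≤ 2 * D * ‖φ - φ'‖ := by
    intro φ φ' z
    rw [hp, hp]
    refine (hlip _ _).trans ?_
    set v := ψ (y₁ z) (x z) - ψ (y₂ z) (x z) with hv
    have h1 : (inner ℝ φ v : ℝ) - (inner ℝ φ' v : ℝ) = (inner ℝ (φ - φ') v : ℝ) :=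
      (inner_sub_left φ φ' v).symm
    rw [h1]
    have h2 : |(inner ℝ (φ - φ') v : ℝ)| ≤ ‖φ - φ'‖ * ‖v‖ := abs_real_inner_le_norm _ _
    have h3 : ‖v‖ ≤ 2 * D := by
      calc ‖v‖ ≤ ‖ψ (y₁ z) (x z)‖ + ‖ψ (y₂ z) (x z)‖ := norm_sub_le _ _
        _ ≤ 2 * D := by linarith [hψ (y₁ z) (x z), hψ (y₂ z) (x z)]
    calc |(inner ℝ (φ - φ') v : ℝ)| ≤ ‖φ - φ'‖ * ‖v‖ := h2
      _ ≤ ‖φ - φ'‖ * (2 * D) := by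
          exact mul_le_mul_of_nonneg_left h3 (norm_nonneg _)
      _ = 2 * D * ‖φ - φ'‖ := by ring
  have hbdd : ∀ (φ φ' : EuclideanSpace ℝ (Fin d)),
      BddAbove (Set.range fun z => |p φ z - p φ' z|) := by
    intro φ φ'
    exact ⟨1, by rintro _ ⟨z, rfl⟩; exact hpbd φ φ' z⟩
  have hd_le : ∀ (φ φ' : EuclideanSpace ℝ (Fin d)) (C : ℝ),
      (∀ z, |p φ z - p φ' z| ≤ C) → dist (p φ) (p φ') ≤ C := by
    intro φ φ' C hC
    rw [hdist]
    exact ciSup_le hC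
  have hd_ge : ∀ (φ φ' : EuclideanSpace ℝ (Fin d)) z,
      |p φ z - p φ' z| ≤ dist (p φ) (p φ') := by
    intro φ φ' z
    rw [hdist]
    exact le_ciSup (hbdd φ φ') z
  set M : ℝ := (Finset.univ.erase u).sup' hne fun k => dist (p (φs k)) (p (φs j)) with hM
  set N : ℝ := ‖φstar - φs u‖ with hN
  have hN0 : 0 ≤ N := norm_nonneg _
  rcases le_or_gt (1 - η u) 0 with h0 | h0
  · have h1 : ε * (1 - η u) / (4 * D) ≤ 0 := by
      apply div_nonpos_of_nonpos_of_nonneg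
      · nlinarith
      · linarith
    linarith
  -- key pointwise estimate
  have hkey : ∀ z, (1 - η u) * |p (φs u) z - p (φs j) z| ≤ 2 * D * N + (1 - η u) * M := by
    intro z
    have hsum_erase : ∑ k ∈ Finset.univ.erase u, η k = 1 - η u := by
      have := Finset.add_sum_erase Finset.univ η (Finset.mem_univ u)
      linarith [hηsum ▸ this]
    have hmixz : p φstar z - p (φs j) z = ∑ k, η k * (p (φs k) z - p (φs j) z) := by
      rw [hmix z]
      have h1 : ∑ k, η k * (p (φs k) z - p (φs j) z)
          = (∑ k, η k * p (φs k) z) - (∑ k, η k) * p (φs j) z := by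
        rw [Finset.sum_mul, ← Finset.sum_sub_distrib]
        exact Finset.sum_congr rfl fun k _ => by ring
      rw [h1, hηsum, one_mul]
    have h2 : |p φstar z - p (φs j) z| ≤ η u * |p (φs u) z - p (φs j) z| + (1 - η u) * M := by
      rw [hmixz]
      refine (Finset.abs_sum_le_sum_abs _ _).trans ?_
      have h3 : ∀ k, |η k * (p (φs k) z - p (φs j) z)| = η k * |p (φs k) z - p (φs j) z| := by
        intro k; rw [abs_mul, abs_of_nonneg (hη0 k)]
      calc ∑ k, |η k * (p (φs k) z - p (φs j) z)|
          = η u * |p (φs u) z - p (φs j) z|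
            + ∑ k ∈ Finset.univ.erase u, η k * |p (φs k) z - p (φs j) z| := by
            rw [← Finset.add_sum_erase Finset.univ
              (fun k => |η k * (p (φs k) z - p (φs j) z)|) (Finset.mem_univ u), h3]
            congr 1
            exact Finset.sum_congr rfl fun k _ => h3 k
        _ ≤ η u * |p (φs u) z - p (φs j) z| + ∑ k ∈ Finset.univ.erase u, η k * M := by
            refine add_le_add le_rfl (Finset.sum_le_sum fun k hk => ?_)
            exact mul_le_mul_of_nonneg_left
              (le_trans (hd_ge _ _ z) (hM ▸ Finset.le_sup' (fun k => dist (p (φs k)) (p (φs j))) hk)) (hη0 k)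
        _ = η u * |p (φs u) z - p (φs j) z| + (1 - η u) * M := by
            rw [← Finset.sum_mul, hsum_erase]
    have h4 : |p (φs u) z - p φstar z| ≤ 2 * D * N := by
      rw [abs_sub_comm]
      exact hplip φstar (φs u) z
    have h5 : |p (φs u) z - p (φs j) z|
        ≤ |p (φs u) z - p φstar z| + |p φstar z - p (φs j) z| := abs_sub_le _ _ _
    nlinarith
  -- conclude
  have hA : dist (p (φs u)) (p (φs j)) ≤ (2 * D * N + (1 - η u) * M) / (1 - η u) := by
    apply hd_le
    intro z
    rw [le_div_iff₀ h0]
    calc |p (φs u) z - p (φs j) z| * (1 - η u)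
        = (1 - η u) * |p (φs u) z - p (φs j) z| := by ring
      _ ≤ 2 * D * N + (1 - η u) * M := hkey z
  have h6 : (1 - η u) * ε ≤ 2 * D * N := by
    have h7 : dist (p (φs u)) (p (φs j)) * (1 - η u) ≤ 2 * D * N + (1 - η u) * M :=
      (le_div_iff₀ h0).mp hA
    rw [hε]
    nlinarith
  rw [div_le_iff₀ (by positivity)]
  nlinarith
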